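/- Every finite concept class C over a finite domain satisfies NCTD(C) ≥ ⌈(1/2)·deg_avg(C)⌉. -/

import Mathlib

open Finset

variable {X : Type*} [DecidableEq X]

/-- A sample set `S` is consistent with concept `C`. -/
def Consistent (C : Finset X) (S : Finset (X × Bool)) : Prop :=
  ∀ p ∈ S, (p.1 ∈ C ↔ p.2 = true)

/-- `T` is a teacher mapping for the class `𝒞`. -/
def IsTeacher (𝒞 : Finset (Finset X)) (T : Finset X → Finset (X × Bool)) : Prop :=
  ∀ C ∈ 𝒞, Consistent C (T C)

/-- `T` is non-clashing on `𝒞`. -/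
def NonClashing (𝒞 : Finset (Finset X)) (T : Finset X → Finset (X × Bool)) : Prop :=
  ∀ C ∈ 𝒞, ∀ C' ∈ 𝒞, C ≠ C' → ¬ (Consistent C' (T C) ∧ Consistent C (T C'))

/-- The no-clash teaching dimension. -/
noncomputable def NCTD (𝒞 : Finset (Finset X)) : ℕ :=
  sInf {d | ∃ T : Finset X → Finset (X × Bool),
    IsTeacher 𝒞 T ∧ NonClashing 𝒞 T ∧ ∀ C ∈ 𝒞, (T C).card ≤ d}

/-- `T` is a positive teacher mapping for `𝒞` (positive examples only). -/
def IsPosTeacher (𝒞 : Finset (Finset X)) (T : Finset X → Finset X) : Prop :=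
  ∀ C ∈ 𝒞, T C ⊆ C

/-- A positive teacher mapping is non-clashing on `𝒞`. -/
def PosNonClashing (𝒞 : Finset (Finset X)) (T : Finset X → Finset X) : Prop :=
  ∀ C ∈ 𝒞, ∀ C' ∈ 𝒞, C ≠ C' → ¬ (T C ⊆ C' ∧ T C' ⊆ C)

/-- The positive no-clash teaching dimension. -/
noncomputable def NCTDplus (𝒞 : Finset (Finset X)) : ℕ :=
  sInf {d | ∃ T : Finset X → Finset X,
    IsPosTeacher 𝒞 T ∧ PosNonClashing 𝒞 T ∧ ∀ C ∈ 𝒞, (T C).card ≤ d}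

/-- The average no-clash teaching dimension (real-valued). -/
noncomputable def ANCTD (𝒞 : Finset (Finset X)) : ℝ :=
  sInf {q : ℝ | ∃ T : Finset X → Finset (X × Bool),
    IsTeacher 𝒞 T ∧ NonClashing 𝒞 T ∧
      q = (∑ C ∈ 𝒞, ((T C).card : ℝ)) / 𝒞.card}

/-- The number of neighbors of `C` in `𝒞` (concepts at symmetric difference one). -/
def degIn (𝒞 : Finset (Finset X)) (C : Finset X) : ℕ :=
  (𝒞.filter (fun C' => ((C \ C') ∪ (C' \ C)).card = 1)).card

/-- The average degree of `𝒞`. -/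
noncomputable def degAvg (𝒞 : Finset (Finset X)) : ℝ :=
  (∑ C ∈ 𝒞, (degIn 𝒞 C : ℝ)) / 𝒞.card

def sdf (C C' : Finset X) : Finset X := (C \ C') ∪ (C' \ C)

lemma sdf_eq_symmDiff (C C' : Finset X) : sdf C C' = symmDiff C C' := (symmDiff_def C C').symm

lemma sdf_comm (C C' : Finset X) : sdf C C' = sdf C' C := by
  simp [sdf, union_comm]

lemma mem_iff_of_not_mem_sdf {C C' : Finset X} {y : X} (h : y ∉ sdf C C') :
    (y ∈ C ↔ y ∈ C') := by
  simp only [sdf, mem_union, mem_sdiff] at h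
  push_neg at h
  tauto

lemma key_lemma {𝒞 : Finset (Finset X)} {T : Finset X → Finset (X × Bool)}
    (hT : IsTeacher 𝒞 T) (hNC : NonClashing 𝒞 T)
    {C C' : Finset X} (hC : C ∈ 𝒞) (hC' : C' ∈ 𝒞) (h1 : (sdf C C').card = 1) :
    sdf C C' ⊆ (T C).image Prod.fst ∨ sdf C C' ⊆ (T C').image Prod.fst := by
  obtain ⟨x, hx⟩ := card_eq_one.mp h1
  by_contra h
  push_neg at h
  obtain ⟨hA, hB⟩ := h
  rw [hx] at hA hB
  have hxA : x ∉ (T C).image Prod.fst := fun hh => hA (singleton_subset_iff.mpr hh)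
  have hxB : x ∉ (T C').image Prod.fst := fun hh => hB (singleton_subset_iff.mpr hh)
  have hne : C ≠ C' := by
    intro he
    rw [he] at hx
    simp only [sdf, sdiff_self, Finset.bot_eq_empty, empty_union] at hx
    exact (singleton_ne_empty x) hx.symm
  refine hNC C hC C' hC' hne ⟨?_, ?_⟩
  · intro p hp
    have hp1 : p.1 ≠ x := fun he => hxA (mem_image.mpr ⟨p, hp, he⟩)
    have h2 := hT C hC p hp
    have hag : p.1 ∈ C ↔ p.1 ∈ C' := mem_iff_of_not_mem_sdf (by rw [hx]; simp [hp1])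
    tauto
  · intro p hp
    have hp1 : p.1 ≠ x := fun he => hxB (mem_image.mpr ⟨p, hp, he⟩)
    have h2 := hT C' hC' p hp
    have hag : p.1 ∈ C ↔ p.1 ∈ C' := mem_iff_of_not_mem_sdf (by rw [hx]; simp [hp1])
    tauto

lemma charge_card_le (𝒞 : Finset (Finset X)) (C : Finset X) (S : Finset (X × Bool)) :
    (𝒞.filter (fun C' => (sdf C C').card = 1 ∧ sdf C C' ⊆ S.image Prod.fst)).card ≤ S.card := by
  calc (𝒞.filter (fun C' => (sdf C C').card = 1 ∧ sdf C C' ⊆ S.image Prod.fst)).card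
      ≤ ((S.image Prod.fst).image fun x => ({x} : Finset X)).card := by
        refine card_le_card_of_injOn (fun C' => sdf C C') ?_ ?_
        · intro C' hC'
          simp only [mem_coe, mem_filter] at hC'
          obtain ⟨_, h1, hsub⟩ := hC'
          obtain ⟨x, hx⟩ := card_eq_one.mp h1
          rw [hx] at hsub
          simp only [hx]
          exact mem_image.mpr ⟨x, singleton_subset_iff.mp hsub, rfl⟩
        · intro C₁ _ C₂ _ he
          have : symmDiff C C₁ = symmDiff C C₂ := by
            rw [← sdf_eq_symmDiff, ← sdf_eq_symmDiff]; exact he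
          exact symmDiff_right_injective C this
    _ ≤ (S.image Prod.fst).card := card_image_le
    _ ≤ S.card := card_image_le

lemma degIn_le {𝒞 : Finset (Finset X)} {T : Finset X → Finset (X × Bool)}
    (hT : IsTeacher 𝒞 T) (hNC : NonClashing 𝒞 T) {C : Finset X} (hC : C ∈ 𝒞) :
    degIn 𝒞 C ≤
      (𝒞.filter (fun C' => (sdf C C').card = 1 ∧ sdf C C' ⊆ (T C).image Prod.fst)).card +
      (𝒞.filter (fun C' => (sdf C C').card = 1 ∧ sdf C C' ⊆ (T C').image Prod.fst)).card := by
  have hsub : 𝒞.filter (fun C' => (sdf C C').card = 1) ⊆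
      (𝒞.filter (fun C' => (sdf C C').card = 1 ∧ sdf C C' ⊆ (T C).image Prod.fst)) ∪
      (𝒞.filter (fun C' => (sdf C C').card = 1 ∧ sdf C C' ⊆ (T C').image Prod.fst)) := by
    intro C' hC'
    simp only [mem_filter, mem_union] at hC' ⊢
    obtain ⟨hm, h1⟩ := hC'
    rcases key_lemma hT hNC hC hm h1 with h | h
    · exact Or.inl ⟨hm, h1, h⟩
    · exact Or.inr ⟨hm, h1, h⟩
  calc degIn 𝒞 C = (𝒞.filter (fun C' => (sdf C C').card = 1)).card := rfl
    _ ≤ _ := le_trans (card_le_card hsub) (card_union_le _ _)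

lemma sum_b_eq_sum_a (𝒞 : Finset (Finset X)) (T : Finset X → Finset (X × Bool)) :
    (∑ C ∈ 𝒞, (𝒞.filter (fun C' => (sdf C C').card = 1 ∧ sdf C C' ⊆ (T C').image Prod.fst)).card)
    = ∑ C ∈ 𝒞, (𝒞.filter (fun C' => (sdf C C').card = 1 ∧ sdf C C' ⊆ (T C).image Prod.fst)).card := by
  simp only [card_filter]
  rw [Finset.sum_comm]
  apply Finset.sum_congr rfl
  intro C' _
  apply Finset.sum_congr rfl
  intro C _
  rw [sdf_comm C C']

lemma sum_deg_le {𝒞 : Finset (Finset X)} {T : Finset X → Finset (X × Bool)}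
    (hT : IsTeacher 𝒞 T) (hNC : NonClashing 𝒞 T) :
    (∑ C ∈ 𝒞, degIn 𝒞 C) ≤ 2 * ∑ C ∈ 𝒞, (T C).card := by
  calc (∑ C ∈ 𝒞, degIn 𝒞 C)
      ≤ ∑ C ∈ 𝒞, ((𝒞.filter (fun C' => (sdf C C').card = 1 ∧ sdf C C' ⊆ (T C).image Prod.fst)).card +
          (𝒞.filter (fun C' => (sdf C C').card = 1 ∧ sdf C C' ⊆ (T C').image Prod.fst)).card) :=
        Finset.sum_le_sum fun C hC => degIn_le hT hNC hC
    _ = (∑ C ∈ 𝒞, (𝒞.filter (fun C' => (sdf C C').card = 1 ∧ sdf C C' ⊆ (T C).image Prod.fst)).card)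
        + ∑ C ∈ 𝒞, (𝒞.filter (fun C' => (sdf C C').card = 1 ∧ sdf C C' ⊆ (T C').image Prod.fst)).card :=
        Finset.sum_add_distrib
    _ = 2 * ∑ C ∈ 𝒞, (𝒞.filter (fun C' => (sdf C C').card = 1 ∧ sdf C C' ⊆ (T C).image Prod.fst)).card := by
        rw [sum_b_eq_sum_a]; ring
    _ ≤ 2 * ∑ C ∈ 𝒞, (T C).card := by
        apply Nat.mul_le_mul_left
        exact Finset.sum_le_sum fun C _ => charge_card_le 𝒞 C (T C)

lemma nctd_set_nonempty [Fintype X] (𝒞 : Finset (Finset X)) :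
    {d | ∃ T : Finset X → Finset (X × Bool),
      IsTeacher 𝒞 T ∧ NonClashing 𝒞 T ∧ ∀ C ∈ 𝒞, (T C).card ≤ d}.Nonempty := by
  refine ⟨Fintype.card X, fun C => univ.image (fun x => (x, decide (x ∈ C))), ?_, ?_, ?_⟩
  · intro C _ p hp
    obtain ⟨x, _, hx⟩ := mem_image.mp hp
    subst hx
    simp
  · intro C _ C' _ hne ⟨h1, _⟩
    have : ∃ x, ¬ (x ∈ C ↔ x ∈ C') := by
      by_contra hall
      push_neg at hall
      exact hne (Finset.ext fun x => hall x)
    obtain ⟨x, hx⟩ := this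
    have hmem : (x, decide (x ∈ C)) ∈ univ.image (fun x => (x, decide (x ∈ C))) :=
      mem_image.mpr ⟨x, mem_univ x, rfl⟩
    have := h1 _ hmem
    simp only [decide_eq_true_eq] at this
    exact hx this.symm
  · intro C _
    exact le_trans card_image_le (by simp)


/-- `NCTD(𝒞) ≥ ⌈deg_avg(𝒞) / 2⌉`. -/
theorem NCTD_ge_ceil_half_degAvg {X : Type*} [DecidableEq X] [Fintype X]
    (𝒞 : Finset (Finset X)) (h𝒞 : 𝒞.Nonempty) :
    ⌈degAvg 𝒞 / 2⌉ ≤ (NCTD 𝒞 : ℤ) := by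
  obtain ⟨T, hT, hNC, hle⟩ := Nat.sInf_mem (nctd_set_nonempty 𝒞)
  set d := NCTD 𝒞 with hd
  have hcount : (∑ C ∈ 𝒞, degIn 𝒞 C) ≤ 2 * (𝒞.card * d) := by
    refine le_trans (sum_deg_le hT hNC) ?_
    apply Nat.mul_le_mul_left
    calc ∑ C ∈ 𝒞, (T C).card ≤ ∑ _C ∈ 𝒞, d := Finset.sum_le_sum hle
      _ = 𝒞.card * d := by rw [Finset.sum_const, smul_eq_mul]
  have hn : (0:ℝ) < 𝒞.card := by
    exact_mod_cast Finset.card_pos.mpr h𝒞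
  rw [Int.ceil_le]
  push_cast
  rw [degAvg, div_div, div_le_iff₀ (by positivity)]
  have : ((∑ C ∈ 𝒞, degIn 𝒞 C : ℕ) : ℝ) ≤ ((2 * (𝒞.card * d) : ℕ) : ℝ) := by exact_mod_cast hcount
  push_cast at this
  nlinarith [this]
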